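/- For 0 ≤ s ≤ t and u ∈ ℝ³ let b_t(s,u) = ∫₀^{t−s} (4πr)^{-3/2} e^{-‖u‖²/(4r)} dr, and set b_t(s,u) = 0 for s > t. Then for every t > 0 and T ≥ t, the function (s,u) ↦ b_t(s,u) is square-integrable on [0,T] × ℝ³; in particular ∫₀^t ∫_{ℝ³} b_t(s,u)² du ds < ∞. -/

import Mathlib

open Real MeasureTheory
open scoped ENNReal NNReal

/-- `b_t(s,u) = ∫₀^{t-s} (4πr)^{-3/2} e^{-‖u‖²/(4r)} dr` (equal to `0` when `s > t`). -/
noncomputable def bker (t s : ℝ) (u : EuclideanSpace ℝ (Fin 3)) : ℝ :=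
  ∫ r in Set.Ioc (0 : ℝ) (t - s), (4 * π * r) ^ (-(3 : ℝ) / 2) * Real.exp (-‖u‖ ^ 2 / (4 * r))

namespace BkerAux

open scoped ENNReal NNReal

local notation "E3" => EuclideanSpace ℝ (Fin 3)

/-- `e^{-x} ≤ x^{-2/3}` for positive `x`. -/
lemma exp_neg_le_rpow {x : ℝ} (hx : 0 < x) : Real.exp (-x) ≤ x ^ (-(2 : ℝ) / 3) := by
  have h : x ^ ((2 : ℝ) / 3) ≤ Real.exp x := by
    rcases le_total x 1 with h1 | h1
    · calc x ^ ((2 : ℝ) / 3) ≤ 1 := Real.rpow_le_one hx.le h1 (by norm_num)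
        _ ≤ Real.exp x := Real.one_le_exp hx.le
    · calc x ^ ((2 : ℝ) / 3) ≤ x ^ (1 : ℝ) :=
          Real.rpow_le_rpow_of_exponent_le h1 (by norm_num)
        _ = x := Real.rpow_one x
        _ ≤ Real.exp x := by linarith [Real.add_one_le_exp x]
  have hpos : 0 < x ^ ((2 : ℝ) / 3) := Real.rpow_pos_of_pos hx _
  rw [Real.exp_neg, show (-(2 : ℝ) / 3) = -((2 : ℝ) / 3) by ring, Real.rpow_neg hx.le]
  exact inv_anti₀ hpos h

noncomputable def cK : ℝ := (4 * π) ^ (-(3 : ℝ) / 2) * 8 ^ ((2 : ℝ) / 3)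

noncomputable def CT (t : ℝ) : ℝ := cK * ∫ r in Set.Ioc (0 : ℝ) t, r ^ (-(5 : ℝ) / 6)

noncomputable def gB (t : ℝ) (u : E3) : ℝ :=
  ‖u‖ ^ (-(4 : ℝ) / 3) * Real.exp (-‖u‖ ^ 2 / (8 * t))

lemma cK_nonneg : 0 ≤ cK :=
  mul_nonneg (Real.rpow_nonneg (by positivity) _) (Real.rpow_nonneg (by norm_num) _)

lemma CT_nonneg (t : ℝ) : 0 ≤ CT t :=
  mul_nonneg cK_nonneg
    (setIntegral_nonneg measurableSet_Ioc fun r hr => Real.rpow_nonneg hr.1.le _)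

lemma gB_nonneg (t : ℝ) (u : E3) : 0 ≤ gB t u :=
  mul_nonneg (Real.rpow_nonneg (norm_nonneg u) _) (Real.exp_pos _).le

lemma kernel_le {t : ℝ} (ht : 0 < t) {r : ℝ} (hr : 0 < r) (hrt : r ≤ t) {u : E3}
    (hu : u ≠ 0) :
    (4 * π * r) ^ (-(3 : ℝ) / 2) * Real.exp (-‖u‖ ^ 2 / (4 * r))
      ≤ cK * gB t u * r ^ (-(5 : ℝ) / 6) := by
  have hn : 0 < ‖u‖ := norm_pos_iff.mpr hu
  set a : ℝ := ‖u‖ ^ 2 with ha_def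
  have ha : 0 < a := by positivity
  have hsplit : Real.exp (-a / (4 * r)) = Real.exp (-a / (8 * r)) * Real.exp (-a / (8 * r)) := by
    rw [← Real.exp_add]
    congr 1
    field_simp
    ring
  have e1 : Real.exp (-a / (8 * r)) ≤ Real.exp (-a / (8 * t)) := by
    apply Real.exp_le_exp.mpr
    rw [neg_div, neg_div, neg_le_neg_iff]
    gcongr
  have e2 : Real.exp (-a / (8 * r)) ≤ (a / (8 * r)) ^ (-(2 : ℝ) / 3) := by
    rw [neg_div]
    exact exp_neg_le_rpow (by positivity)
  have hmulr : (4 * π * r) ^ (-(3 : ℝ) / 2) = (4 * π) ^ (-(3 : ℝ) / 2) * r ^ (-(3 : ℝ) / 2) :=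
    Real.mul_rpow (by positivity) hr.le
  have hdiv : (a / (8 * r)) ^ (-(2 : ℝ) / 3)
      = ‖u‖ ^ (-(4 : ℝ) / 3) * (8 ^ ((2 : ℝ) / 3) * r ^ ((2 : ℝ) / 3)) := by
    rw [Real.div_rpow ha.le (by positivity)]
    rw [show (-(2 : ℝ) / 3) = -((2 : ℝ) / 3) by ring, Real.rpow_neg ha.le,
      Real.rpow_neg (by positivity : (0 : ℝ) ≤ 8 * r), div_eq_mul_inv, inv_inv]
    have h1 : (a : ℝ) ^ ((2 : ℝ) / 3) = ‖u‖ ^ ((4 : ℝ) / 3) := by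
      rw [ha_def, ← Real.rpow_natCast ‖u‖ 2, ← Real.rpow_mul (norm_nonneg u)]
      norm_num
    have h2 : ((8 : ℝ) * r) ^ ((2 : ℝ) / 3) = 8 ^ ((2 : ℝ) / 3) * r ^ ((2 : ℝ) / 3) :=
      Real.mul_rpow (by norm_num) hr.le
    rw [h1, h2, show (-(4 : ℝ) / 3) = -((4 : ℝ) / 3) by ring, Real.rpow_neg (norm_nonneg u)]
  have hr1 : r ^ (-(3 : ℝ) / 2) * r ^ ((2 : ℝ) / 3) = r ^ (-(5 : ℝ) / 6) := by
    rw [← Real.rpow_add hr]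
    norm_num
  calc (4 * π * r) ^ (-(3 : ℝ) / 2) * Real.exp (-a / (4 * r))
      = (4 * π) ^ (-(3 : ℝ) / 2) * r ^ (-(3 : ℝ) / 2)
        * (Real.exp (-a / (8 * r)) * Real.exp (-a / (8 * r))) := by rw [hmulr, hsplit]
    _ ≤ (4 * π) ^ (-(3 : ℝ) / 2) * r ^ (-(3 : ℝ) / 2)
        * ((a / (8 * r)) ^ (-(2 : ℝ) / 3) * Real.exp (-a / (8 * t))) := by
        apply mul_le_mul_of_nonneg_left
        · exact mul_le_mul e2 e1 (Real.exp_pos _).le (Real.rpow_nonneg (by positivity) _)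
        · exact mul_nonneg (Real.rpow_nonneg (by positivity) _)
            (Real.rpow_nonneg hr.le _)
    _ = cK * gB t u * r ^ (-(5 : ℝ) / 6) := by
        rw [hdiv, cK, gB, ← ha_def, ← hr1]
        ring

lemma bker_nonneg (t s : ℝ) (u : E3) : 0 ≤ bker t s u := by
  apply setIntegral_nonneg measurableSet_Ioc
  intro r hr
  have h1 : (0 : ℝ) ≤ (4 * π * r) ^ (-(3 : ℝ) / 2) := by
    apply Real.rpow_nonneg
    have := hr.1
    positivity
  exact mul_nonneg h1 (Real.exp_pos _).le

lemma bker_le {t : ℝ} (ht : 0 < t) {s : ℝ} (hs : 0 ≤ s) {u : E3} (hu : u ≠ 0) :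
    bker t s u ≤ CT t * gB t u := by
  rcases le_or_gt (t - s) 0 with h | h
  · rw [bker, Set.Ioc_eq_empty (by exact not_lt.mpr h)]
    simp only [Measure.restrict_empty, integral_zero_measure]
    exact mul_nonneg (CT_nonneg t) (gB_nonneg t u)
  · have hmaj : IntegrableOn (fun r : ℝ => cK * gB t u * r ^ (-(5 : ℝ) / 6))
        (Set.Ioc (0 : ℝ) t) := by
      have h56 : IntegrableOn (fun x : ℝ => x ^ (-(5 : ℝ) / 6)) (Set.Ioc (0 : ℝ) t) := by
        rw [← intervalIntegrable_iff_integrableOn_Ioc_of_le ht.le]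
        exact intervalIntegral.intervalIntegrable_rpow' (by norm_num)
      exact h56.const_mul _
    have hsub : Set.Ioc (0 : ℝ) (t - s) ⊆ Set.Ioc (0 : ℝ) t :=
      Set.Ioc_subset_Ioc_right (by linarith)
    have hKm : Measurable fun r : ℝ =>
        (4 * π * r) ^ (-(3 : ℝ) / 2) * Real.exp (-‖u‖ ^ 2 / (4 * r)) := by fun_prop
    have hK : IntegrableOn (fun r : ℝ =>
        (4 * π * r) ^ (-(3 : ℝ) / 2) * Real.exp (-‖u‖ ^ 2 / (4 * r)))
        (Set.Ioc (0 : ℝ) (t - s)) := by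
      apply Integrable.mono' (hmaj.mono_set hsub) hKm.aestronglyMeasurable
      rw [ae_restrict_iff' measurableSet_Ioc]
      apply ae_of_all
      intro r hr
      have hb := kernel_le ht hr.1 (hr.2.trans (by linarith)) hu
      have h1 : (0 : ℝ) ≤ (4 * π * r) ^ (-(3 : ℝ) / 2) := by
        apply Real.rpow_nonneg
        have := hr.1
        positivity
      rw [Real.norm_of_nonneg (mul_nonneg h1 (Real.exp_pos _).le)]
      exact hb
    calc bker t s u
        ≤ ∫ r in Set.Ioc (0 : ℝ) (t - s), cK * gB t u * r ^ (-(5 : ℝ) / 6) := by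
          apply setIntegral_mono_on hK (hmaj.mono_set hsub) measurableSet_Ioc
          intro r hr
          exact kernel_le ht hr.1 (hr.2.trans (by linarith)) hu
      _ ≤ ∫ r in Set.Ioc (0 : ℝ) t, cK * gB t u * r ^ (-(5 : ℝ) / 6) := by
          apply setIntegral_mono_set hmaj
          · filter_upwards [ae_restrict_mem measurableSet_Ioc] with r hr
            have : (0 : ℝ) ≤ r ^ (-(5 : ℝ) / 6) := Real.rpow_nonneg hr.1.le _
            exact mul_nonneg (mul_nonneg cK_nonneg (gB_nonneg t u)) this
          · exact HasSubset.Subset.eventuallyLE hsub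
      _ = CT t * gB t u := by
          rw [integral_const_mul]
          unfold CT
          ring

lemma bker_measurable (t : ℝ) : Measurable fun p : ℝ × E3 => bker t p.1 p.2 := by
  have h : ∀ p : ℝ × E3, bker t p.1 p.2
      = ∫ r : ℝ, Set.indicator {q : (ℝ × E3) × ℝ | q.2 ∈ Set.Ioc (0 : ℝ) (t - q.1.1)}
          (fun q => (4 * π * q.2) ^ (-(3 : ℝ) / 2) * Real.exp (-‖q.1.2‖ ^ 2 / (4 * q.2)))
          (p, r) := by
    intro p
    rw [bker, ← integral_indicator measurableSet_Ioc]
    congr 1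
  simp_rw [h]
  have hS : MeasurableSet {q : (ℝ × E3) × ℝ | q.2 ∈ Set.Ioc (0 : ℝ) (t - q.1.1)} := by
    have : {q : (ℝ × E3) × ℝ | q.2 ∈ Set.Ioc (0 : ℝ) (t - q.1.1)}
        = {q : (ℝ × E3) × ℝ | 0 < q.2} ∩ {q : (ℝ × E3) × ℝ | q.2 ≤ t - q.1.1} := by
      ext q; simp [Set.mem_Ioc]
    rw [this]
    exact (measurableSet_lt measurable_const measurable_snd).inter
      (measurableSet_le measurable_snd (measurable_const.sub measurable_fst.fst))
  have hF : Measurable fun q : (ℝ × E3) × ℝ =>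
      (4 * π * q.2) ^ (-(3 : ℝ) / 2) * Real.exp (-‖q.1.2‖ ^ 2 / (4 * q.2)) := by fun_prop
  exact (StronglyMeasurable.integral_prod_right'
    ((hF.indicator hS).stronglyMeasurable)).measurable

lemma gB_measurable (t : ℝ) : Measurable (gB t) := by
  unfold gB
  fun_prop

/-- The singular part: `‖u‖^{-8/3}` is integrable on the unit ball of `ℝ³`. -/
lemma finite_ball :
    ∫⁻ u : E3 in Metric.ball 0 1, ENNReal.ofReal (‖u‖ ^ (-(8 : ℝ) / 3)) < ⊤ := by
  set ν := volume.restrict (Metric.ball (0 : E3) 1) with hν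
  have f_nn : 0 ≤ᵐ[ν] fun u : E3 => ‖u‖ ^ (-(8 : ℝ) / 3) :=
    ae_of_all _ fun u => Real.rpow_nonneg (norm_nonneg u) _
  have f_mble : AEMeasurable (fun u : E3 => ‖u‖ ^ (-(8 : ℝ) / 3)) ν :=
    (by fun_prop : Measurable fun u : E3 => ‖u‖ ^ (-(8 : ℝ) / 3)).aemeasurable
  rw [show (∫⁻ u : E3 in Metric.ball 0 1, ENNReal.ofReal (‖u‖ ^ (-(8 : ℝ) / 3)))
      = ∫⁻ u, ENNReal.ofReal (‖u‖ ^ (-(8 : ℝ) / 3)) ∂ν from rfl,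
    lintegral_eq_lintegral_meas_le ν f_nn f_mble]
  have hBfin : volume (Metric.ball (0 : E3) 1) < ⊤ := measure_ball_lt_top
  calc ∫⁻ s in Set.Ioi 0, ν {a : E3 | s ≤ ‖a‖ ^ (-(8 : ℝ) / 3)}
      ≤ ∫⁻ s in Set.Ioc (0 : ℝ) 1 ∪ Set.Ioi 1, ν {a : E3 | s ≤ ‖a‖ ^ (-(8 : ℝ) / 3)} :=
        lintegral_mono_set Set.Ioi_subset_Ioc_union_Ioi
    _ ≤ (∫⁻ s in Set.Ioc (0 : ℝ) 1, ν {a : E3 | s ≤ ‖a‖ ^ (-(8 : ℝ) / 3)})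
        + ∫⁻ s in Set.Ioi (1 : ℝ), ν {a : E3 | s ≤ ‖a‖ ^ (-(8 : ℝ) / 3)} :=
        lintegral_union_le _ _ _
    _ < ⊤ := by
        apply ENNReal.add_lt_top.2
        constructor
        · calc ∫⁻ s in Set.Ioc (0 : ℝ) 1, ν {a : E3 | s ≤ ‖a‖ ^ (-(8 : ℝ) / 3)}
              ≤ ∫⁻ _ in Set.Ioc (0 : ℝ) 1, volume (Metric.ball (0 : E3) 1) := by
                apply lintegral_mono
                intro s
                calc ν {a : E3 | s ≤ ‖a‖ ^ (-(8 : ℝ) / 3)} ≤ ν Set.univ :=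
                      measure_mono (Set.subset_univ _)
                  _ = volume (Metric.ball (0 : E3) 1) := by
                      rw [hν, Measure.restrict_apply_univ]
            _ < ⊤ := by
                rw [setLIntegral_const]
                exact ENNReal.mul_lt_top hBfin (by simp [Real.volume_Ioc])
        · have hmono : ∀ s ∈ Set.Ioi (1 : ℝ), ν {a : E3 | s ≤ ‖a‖ ^ (-(8 : ℝ) / 3)}
              ≤ ENNReal.ofReal (s ^ (-(9 : ℝ) / 8)) * volume (Metric.ball (0 : E3) 1) := by
            intro s hs
            have hs0 : (0 : ℝ) < s := lt_trans one_pos hs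
            have hsub : {a : E3 | s ≤ ‖a‖ ^ (-(8 : ℝ) / 3)}
                ⊆ Metric.closedBall (0 : E3) (s ^ (-(3 : ℝ) / 8)) := by
              intro a hma
              simp only [Set.mem_setOf_eq] at hma
              have ha0 : a ≠ 0 := by
                intro h0
                rw [h0, norm_zero, Real.zero_rpow (by norm_num)] at hma
                linarith
              have hna : 0 < ‖a‖ := norm_pos_iff.mpr ha0
              have h2 := Real.rpow_le_rpow_of_nonpos hs0 hma (by norm_num : (-(3 : ℝ) / 8) ≤ 0)
              rw [← Real.rpow_mul (norm_nonneg a)] at h2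
              have h3 : (-(8 : ℝ) / 3) * (-(3 : ℝ) / 8) = 1 := by norm_num
              rw [h3, Real.rpow_one] at h2
              rw [Metric.mem_closedBall, dist_zero_right]
              exact h2
            calc ν {a : E3 | s ≤ ‖a‖ ^ (-(8 : ℝ) / 3)}
                ≤ volume {a : E3 | s ≤ ‖a‖ ^ (-(8 : ℝ) / 3)} :=
                  Measure.restrict_le_self _
              _ ≤ volume (Metric.closedBall (0 : E3) (s ^ (-(3 : ℝ) / 8))) :=
                  measure_mono hsub
              _ = ENNReal.ofReal ((s ^ (-(3 : ℝ) / 8)) ^ Module.finrank ℝ E3)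
                    * volume (Metric.ball (0 : E3) 1) :=
                  Measure.addHaar_closedBall volume 0 (Real.rpow_nonneg hs0.le _)
              _ = ENNReal.ofReal (s ^ (-(9 : ℝ) / 8)) * volume (Metric.ball (0 : E3) 1) := by
                  congr 2
                  rw [finrank_euclideanSpace_fin, ← Real.rpow_natCast (s ^ (-(3 : ℝ) / 8)) 3,
                    ← Real.rpow_mul hs0.le]
                  norm_num
          calc ∫⁻ s in Set.Ioi (1 : ℝ), ν {a : E3 | s ≤ ‖a‖ ^ (-(8 : ℝ) / 3)}
              ≤ ∫⁻ s in Set.Ioi (1 : ℝ),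
                  ENNReal.ofReal (s ^ (-(9 : ℝ) / 8)) * volume (Metric.ball (0 : E3) 1) :=
                setLIntegral_mono' measurableSet_Ioi hmono
            _ = (∫⁻ s in Set.Ioi (1 : ℝ), ENNReal.ofReal (s ^ (-(9 : ℝ) / 8)))
                  * volume (Metric.ball (0 : E3) 1) := by
                rw [lintegral_mul_const]
                fun_prop
            _ < ⊤ := by
                apply ENNReal.mul_lt_top _ hBfin
                have hint : IntegrableOn (fun s : ℝ => s ^ (-(9 : ℝ) / 8)) (Set.Ioi 1) :=
                  integrableOn_Ioi_rpow_of_lt (by norm_num) one_pos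
                have hnn : 0 ≤ᵐ[volume.restrict (Set.Ioi (1 : ℝ))]
                    fun s : ℝ => s ^ (-(9 : ℝ) / 8) := by
                  filter_upwards [ae_restrict_mem measurableSet_Ioi] with s hs
                  exact Real.rpow_nonneg (le_of_lt (lt_trans one_pos hs)) _
                exact (hasFiniteIntegral_iff_ofReal hnn).1 hint.2

lemma tail_bound {t : ℝ} (ht : 0 < t) {x : ℝ} (hx : 1 ≤ x) :
    Real.exp (-x ^ 2 / (4 * t)) ≤ (16 * (16 * t) ^ 4) * (1 + x) ^ (-(4 : ℝ)) := by
  have hx0 : (0 : ℝ) < x := lt_of_lt_of_le one_pos hx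
  have h1x : (0 : ℝ) < 1 + x := by linarith
  have h1 : (1 + x) ^ (-(4 : ℝ)) = ((1 + x) ^ (4 : ℕ))⁻¹ := by
    rw [← Real.rpow_natCast (1 + x) 4, ← Real.rpow_neg h1x.le]
    norm_num
  have key : x ^ 8 ≤ (16 * t) ^ 4 * Real.exp (x ^ 2 / (4 * t)) := by
    have h2 : Real.exp (x ^ 2 / (16 * t)) ^ (4 : ℕ) = Real.exp (x ^ 2 / (4 * t)) := by
      rw [← Real.exp_nat_mul]
      congr 1
      field_simp
      ring
    have h3 : (x ^ 2 / (16 * t)) ^ (4 : ℕ) ≤ Real.exp (x ^ 2 / (4 * t)) := by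
      rw [← h2]
      apply pow_le_pow_left₀ (by positivity)
      linarith [Real.add_one_le_exp (x ^ 2 / (16 * t))]
    have h4 : (x ^ 2 / (16 * t)) ^ (4 : ℕ) = x ^ 8 / (16 * t) ^ 4 := by
      rw [div_pow]
      ring_nf
    rw [h4] at h3
    calc x ^ 8 = x ^ 8 / (16 * t) ^ 4 * (16 * t) ^ 4 := by field_simp
      _ ≤ Real.exp (x ^ 2 / (4 * t)) * (16 * t) ^ 4 := by
          apply mul_le_mul_of_nonneg_right h3 (by positivity)
      _ = (16 * t) ^ 4 * Real.exp (x ^ 2 / (4 * t)) := by ring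
  rw [h1, ← div_eq_mul_inv, le_div_iff₀ (by positivity)]
  have hE : Real.exp (-x ^ 2 / (4 * t)) = (Real.exp (x ^ 2 / (4 * t)))⁻¹ := by
    rw [← Real.exp_neg]
    congr 1
    ring
  have hp : (1 + x) ^ (4 : ℕ) ≤ 16 * x ^ 8 := by
    calc (1 + x) ^ (4 : ℕ) ≤ (2 * x) ^ (4 : ℕ) := by
          apply pow_le_pow_left₀ h1x.le
          linarith
      _ = 16 * x ^ 4 := by ring
      _ ≤ 16 * x ^ 8 := by
          have : x ^ 4 ≤ x ^ 8 := pow_le_pow_right₀ hx (by norm_num)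
          linarith
  have hEpos : (0 : ℝ) < Real.exp (x ^ 2 / (4 * t)) := Real.exp_pos _
  calc Real.exp (-x ^ 2 / (4 * t)) * (1 + x) ^ (4 : ℕ)
      ≤ Real.exp (-x ^ 2 / (4 * t)) * (16 * x ^ 8) := by
        apply mul_le_mul_of_nonneg_left hp (Real.exp_pos _).le
    _ = 16 * ((Real.exp (x ^ 2 / (4 * t)))⁻¹ * x ^ 8) := by rw [hE]; ring
    _ ≤ 16 * ((Real.exp (x ^ 2 / (4 * t)))⁻¹ * ((16 * t) ^ 4 * Real.exp (x ^ 2 / (4 * t)))) := by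
        apply mul_le_mul_of_nonneg_left _ (by norm_num)
        apply mul_le_mul_of_nonneg_left key (by positivity)
    _ = 16 * (16 * t) ^ 4 := by
        field_simp

lemma lintegral_gB_sq_lt_top {t : ℝ} (ht : 0 < t) :
    ∫⁻ u : E3, ENNReal.ofReal (gB t u ^ 2) < ⊤ := by
  set Cb : ℝ := 16 * (16 * t) ^ 4 with hCb
  have hpt : ∀ u : E3, ENNReal.ofReal (gB t u ^ 2)
      ≤ (Metric.ball (0 : E3) 1).indicator
          (fun u => ENNReal.ofReal (‖u‖ ^ (-(8 : ℝ) / 3))) u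
        + ENNReal.ofReal (Cb * (1 + ‖u‖) ^ (-(4 : ℝ))) := by
    intro u
    have hA2 : (‖u‖ ^ (-(4 : ℝ) / 3)) ^ 2 = ‖u‖ ^ (-(8 : ℝ) / 3) := by
      rw [← Real.rpow_natCast (‖u‖ ^ (-(4 : ℝ) / 3)) 2, ← Real.rpow_mul (norm_nonneg u)]
      norm_num
    rcases lt_or_ge ‖u‖ 1 with hu1 | hu1
    · have hmem : u ∈ Metric.ball (0 : E3) 1 := by
        rw [Metric.mem_ball, dist_zero_right]; exact hu1
      rw [Set.indicator_of_mem hmem]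
      refine le_trans ?_ le_self_add
      apply ENNReal.ofReal_le_ofReal
      calc gB t u ^ 2 = (‖u‖ ^ (-(4 : ℝ) / 3)) ^ 2 * Real.exp (-‖u‖ ^ 2 / (8 * t)) ^ 2 := by
            rw [gB]; ring
        _ ≤ (‖u‖ ^ (-(4 : ℝ) / 3)) ^ 2 * 1 := by
            apply mul_le_mul_of_nonneg_left _ (by positivity)
            have hle : Real.exp (-‖u‖ ^ 2 / (8 * t)) ≤ 1 := by
              apply Real.exp_le_one_iff.mpr
              have : (0 : ℝ) ≤ ‖u‖ ^ 2 / (8 * t) := by positivity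
              rw [neg_div]
              linarith
            calc Real.exp (-‖u‖ ^ 2 / (8 * t)) ^ 2
                ≤ 1 ^ 2 := pow_le_pow_left₀ (Real.exp_pos _).le hle 2
              _ = 1 := one_pow 2
        _ = ‖u‖ ^ (-(8 : ℝ) / 3) := by rw [hA2, mul_one]
    · refine le_trans ?_ le_add_self
      apply ENNReal.ofReal_le_ofReal
      have hexp2 : Real.exp (-‖u‖ ^ 2 / (8 * t)) ^ 2 = Real.exp (-‖u‖ ^ 2 / (4 * t)) := by
        rw [sq, ← Real.exp_add]
        congr 1
        field_simp
        ring
      calc gB t u ^ 2 = (‖u‖ ^ (-(4 : ℝ) / 3)) ^ 2 * Real.exp (-‖u‖ ^ 2 / (8 * t)) ^ 2 := by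
            rw [gB]; ring
        _ ≤ 1 * Real.exp (-‖u‖ ^ 2 / (4 * t)) := by
            rw [hexp2]
            apply mul_le_mul_of_nonneg_right _ (Real.exp_pos _).le
            have : ‖u‖ ^ (-(4 : ℝ) / 3) ≤ 1 :=
              Real.rpow_le_one_of_one_le_of_nonpos hu1 (by norm_num)
            calc (‖u‖ ^ (-(4 : ℝ) / 3)) ^ 2 ≤ 1 ^ 2 :=
                pow_le_pow_left₀ (Real.rpow_nonneg (norm_nonneg u) _) this 2
              _ = 1 := one_pow 2
        _ = Real.exp (-‖u‖ ^ 2 / (4 * t)) := one_mul _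
        _ ≤ Cb * (1 + ‖u‖) ^ (-(4 : ℝ)) := tail_bound ht hu1
  calc ∫⁻ u : E3, ENNReal.ofReal (gB t u ^ 2)
      ≤ ∫⁻ u : E3, ((Metric.ball (0 : E3) 1).indicator
            (fun u => ENNReal.ofReal (‖u‖ ^ (-(8 : ℝ) / 3))) u
          + ENNReal.ofReal (Cb * (1 + ‖u‖) ^ (-(4 : ℝ)))) := lintegral_mono hpt
    _ = (∫⁻ u : E3, (Metric.ball (0 : E3) 1).indicator
            (fun u => ENNReal.ofReal (‖u‖ ^ (-(8 : ℝ) / 3))) u)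
        + ∫⁻ u : E3, ENNReal.ofReal (Cb * (1 + ‖u‖) ^ (-(4 : ℝ))) := by
        apply lintegral_add_left
        exact Measurable.indicator (by fun_prop) measurableSet_ball
    _ < ⊤ := by
        apply ENNReal.add_lt_top.2
        constructor
        · rw [lintegral_indicator measurableSet_ball]
          exact finite_ball
        · have : ∀ u : E3, ENNReal.ofReal (Cb * (1 + ‖u‖) ^ (-(4 : ℝ)))
              = ENNReal.ofReal Cb * ENNReal.ofReal ((1 + ‖u‖) ^ (-(4 : ℝ))) := fun u => by
            rw [ENNReal.ofReal_mul (by positivity)]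
          simp_rw [this]
          rw [lintegral_const_mul' _ _ ENNReal.ofReal_ne_top]
          apply ENNReal.mul_lt_top ENNReal.ofReal_lt_top
          apply finite_integral_one_add_norm
          rw [finrank_euclideanSpace_fin]
          norm_num

lemma sq_nnnorm_eq (x : ℝ) : ((‖x‖₊ : ℝ≥0∞)) ^ (2 : ℕ) = ENNReal.ofReal (x ^ 2) := by
  rw [← ENNReal.coe_pow, ← nnnorm_pow]; exact Real.enorm_eq_ofReal (sq_nonneg x)

end BkerAux

open BkerAux in
/-- For every `t > 0` and `T ≥ t`, `(s,u) ↦ b_t(s,u)` is square-integrable on `[0,T] × ℝ³`;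
in particular `∫₀^t ∫_{ℝ³} b_t(s,u)² du ds < ∞`. -/
theorem bker_memLp_two (t T : ℝ) (ht : 0 < t) (hT : t ≤ T) :
    MemLp (fun p : ℝ × EuclideanSpace ℝ (Fin 3) => bker t p.1 p.2) 2
        ((volume.restrict (Set.Icc (0 : ℝ) T)).prod volume) ∧
      (∫⁻ s in Set.Ioc (0 : ℝ) t,
          ∫⁻ u : EuclideanSpace ℝ (Fin 3), ENNReal.ofReal (bker t s u ^ 2)) < ⊤ := by
  set P := ((volume.restrict (Set.Icc (0 : ℝ) T)).prod
    (volume : Measure (EuclideanSpace ℝ (Fin 3)))) with hP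
  have hbm := bker_measurable t
  have hT0 : (0 : ℝ) ≤ T := le_trans ht.le hT
  have hA1 : ∀ᵐ p ∂P, p.1 ∈ Set.Icc (0 : ℝ) T := by
    rw [ae_iff]
    have hset : {p : ℝ × EuclideanSpace ℝ (Fin 3) | ¬ p.1 ∈ Set.Icc (0 : ℝ) T}
        = (Set.Icc (0 : ℝ) T)ᶜ ×ˢ Set.univ := by
      ext p; simp
    rw [hset, hP, Measure.prod_prod, Measure.restrict_apply measurableSet_Icc.compl]
    simp
  have hA2 : ∀ᵐ p ∂P, p.2 ≠ (0 : EuclideanSpace ℝ (Fin 3)) := by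
    rw [ae_iff]
    have hset : {p : ℝ × EuclideanSpace ℝ (Fin 3) | ¬ p.2 ≠ 0}
        = Set.univ ×ˢ ({(0 : EuclideanSpace ℝ (Fin 3))} : Set (EuclideanSpace ℝ (Fin 3))) := by
      ext p
      simp only [Set.mem_setOf_eq, not_not, Set.mem_prod, Set.mem_univ, true_and,
        Set.mem_singleton_iff]
    rw [hset, hP, Measure.prod_prod]
    simp
  have hGm : Measurable fun p : ℝ × EuclideanSpace ℝ (Fin 3) => CT t * gB t p.2 :=
    ((gB_measurable t).const_mul (CT t)).comp measurable_snd
  have hIu : ∫⁻ u : EuclideanSpace ℝ (Fin 3), ((‖CT t * gB t u‖₊ : ℝ≥0∞)) ^ (2 : ℕ) < ⊤ := by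
    have heq : ∀ u : EuclideanSpace ℝ (Fin 3),
        ((‖CT t * gB t u‖₊ : ℝ≥0∞)) ^ (2 : ℕ)
          = ENNReal.ofReal ((CT t) ^ 2) * ENNReal.ofReal (gB t u ^ 2) := fun u => by
      rw [sq_nnnorm_eq, mul_pow, ENNReal.ofReal_mul (sq_nonneg _)]
    simp_rw [heq]
    rw [lintegral_const_mul' _ _ ENNReal.ofReal_ne_top]
    exact ENNReal.mul_lt_top ENNReal.ofReal_lt_top (lintegral_gB_sq_lt_top ht)
  have hG : MemLp (fun p : ℝ × EuclideanSpace ℝ (Fin 3) => CT t * gB t p.2) 2 P := by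
    refine ⟨hGm.aestronglyMeasurable, ?_⟩
    rw [eLpNorm_lt_top_iff_lintegral_rpow_enorm_lt_top (by norm_num) (by norm_num)]
    simp only [enorm_eq_nnnorm]
    have h2 : ∀ x : ℝ≥0∞, x ^ ((2 : ℝ≥0∞).toReal) = x ^ (2 : ℕ) := fun x => by
      rw [show ((2 : ℝ≥0∞).toReal) = ((2 : ℕ) : ℝ) by norm_num, ENNReal.rpow_natCast]
    simp_rw [h2]
    have hmeas2 : AEMeasurable
        (fun u : EuclideanSpace ℝ (Fin 3) => ((‖CT t * gB t u‖₊ : ℝ≥0∞)) ^ (2 : ℕ))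
        (volume : Measure (EuclideanSpace ℝ (Fin 3))) :=
      ((((gB_measurable t).const_mul (CT t)).nnnorm.coe_nnreal_ennreal).pow_const
        (2 : ℕ)).aemeasurable
    have hfact : ∫⁻ p, ((‖CT t * gB t p.2‖₊ : ℝ≥0∞)) ^ (2 : ℕ) ∂P
        = (∫⁻ _ : ℝ, (1 : ℝ≥0∞) ∂(volume.restrict (Set.Icc (0 : ℝ) T)))
          * ∫⁻ u : EuclideanSpace ℝ (Fin 3), ((‖CT t * gB t u‖₊ : ℝ≥0∞)) ^ (2 : ℕ) := by
      rw [hP, show (fun p : ℝ × EuclideanSpace ℝ (Fin 3) =>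
          ((‖CT t * gB t p.2‖₊ : ℝ≥0∞)) ^ (2 : ℕ))
        = fun p : ℝ × EuclideanSpace ℝ (Fin 3) => (fun _ : ℝ => (1 : ℝ≥0∞)) p.1
            * (fun u => ((‖CT t * gB t u‖₊ : ℝ≥0∞)) ^ (2 : ℕ)) p.2 from
          funext fun p => (one_mul _).symm]
      exact lintegral_prod_mul aemeasurable_const hmeas2
    rw [hfact]
    apply ENNReal.mul_lt_top _ hIu
    rw [lintegral_one, Measure.restrict_apply_univ, Real.volume_Icc]
    exact ENNReal.ofReal_lt_top
  have hbound : ∀ᵐ p ∂P, ‖bker t p.1 p.2‖ ≤ ‖CT t * gB t p.2‖ := by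
    filter_upwards [hA1, hA2] with p hp1 hp2
    rw [Real.norm_of_nonneg (bker_nonneg t p.1 p.2), Real.norm_eq_abs]
    exact (bker_le ht hp1.1 hp2).trans (le_abs_self _)
  have hM : MemLp (fun p : ℝ × EuclideanSpace ℝ (Fin 3) => bker t p.1 p.2) 2 P :=
    hG.of_le hbm.aestronglyMeasurable hbound
  refine ⟨hM, ?_⟩
  have key := hM.2
  rw [eLpNorm_lt_top_iff_lintegral_rpow_enorm_lt_top (by norm_num) (by norm_num)] at key
  simp only [enorm_eq_nnnorm] at key
  have hconv : ∀ p : ℝ × EuclideanSpace ℝ (Fin 3),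
      ((‖bker t p.1 p.2‖₊ : ℝ≥0∞)) ^ ((2 : ℝ≥0∞).toReal)
        = ENNReal.ofReal (bker t p.1 p.2 ^ 2) := fun p => by
    rw [show ((2 : ℝ≥0∞).toReal) = ((2 : ℕ) : ℝ) by norm_num, ENNReal.rpow_natCast,
      sq_nnnorm_eq]
  simp_rw [hconv] at key
  rw [hP, lintegral_prod _ ((hbm.pow_const 2).ennreal_ofReal.aemeasurable)] at key
  refine lt_of_le_of_lt ?_ key
  exact lintegral_mono_set (Set.Ioc_subset_Icc_self.trans (Set.Icc_subset_Icc_right hT))
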